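/- Let x ∈ C[0,1] be Hölder continuous, θ_{m,k} its Faber–Schauder coefficients, and define z^{(n,k)}_i := 2^{3n/2} Σ_{m=n}^{n+k} 2^{−3m/2} Σ_{j=0}^{2^{m−n}−1} θ_{m, j + 2^{m−n}(i−1)} for 1 ≤ i ≤ 2^n. Then z^{(n,k)}_i = Σ_{j=0}^{2^{n+k+1}} ξ^{(n,k,i)}_j x(j/2^{n+k+1}), where ξ^{(n,k,i)}_j = 0 if j ≤ 2^{k+1}(i−1) − 1 or j ≥ 2^{k+1} i + 1; ξ^{(n,k,i)}_j = 2^{n/2}(2^{−k} − 2) if j = 2^{k+1}(i−1) or j = 2^{k+1} i; and ξ^{(n,k,i)}_j = 2^{1−k+n/2} for 2^{k+1}(i−1) + 1 ≤ j ≤ 2^{k+1} i − 1. -/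

import Mathlib

open Finset

noncomputable def theta (x : ℝ → ℝ) (m j : ℕ) : ℝ :=
  2 ^ ((m : ℝ) / 2) *
    (2 * x ((2 * j + 1) / 2 ^ (m + 1)) - x (j / 2 ^ m) - x ((j + 1) / 2 ^ m))

/-- Truncated version `z^{(n,k)}_i` of the vector `z_n`. -/
noncomputable def znk (x : ℝ → ℝ) (n k i : ℕ) : ℝ :=
  2 ^ ((3 * (n : ℝ)) / 2) *
    ∑ m ∈ Finset.Icc n (n + k),
      2 ^ (-(3 * (m : ℝ)) / 2) *
        ∑ j ∈ range (2 ^ (m - n)), theta x m (j + 2 ^ (m - n) * (i - 1))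

/-- The coefficients `ξ^{(n,k,i)}_j`. -/
noncomputable def xi (n k i j : ℕ) : ℝ :=
  if j < 2 ^ (k + 1) * (i - 1) ∨ 2 ^ (k + 1) * i < j then 0
  else if j = 2 ^ (k + 1) * (i - 1) ∨ j = 2 ^ (k + 1) * i then
    2 ^ ((n : ℝ) / 2) * (2 ^ (-(k : ℝ)) - 2)
  else 2 ^ (1 - (k : ℝ) + (n : ℝ) / 2)

noncomputable def G (x : ℝ → ℝ) (M p : ℕ) : ℝ := x ((p : ℝ) / 2 ^ M)

noncomputable def Fa (x : ℝ → ℝ) (n i t : ℕ) : ℝ :=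
  ∑ j ∈ range (2 ^ t + 1), G x (n + t) (j + 2 ^ t * (i - 1))

lemma Gdouble (x : ℝ → ℝ) (M p : ℕ) : G x (M + 1) (2 * p) = G x M p := by
  unfold G
  congr 1
  push_cast
  rw [pow_succ]
  field_simp

lemma Gpow (x : ℝ → ℝ) (n c : ℕ) : ∀ s, G x (n + s) (2 ^ s * c) = G x n c := by
  intro s
  induction s with
  | zero => simp
  | succ s ih =>
    have e : 2 ^ (s + 1) * c = 2 * (2 ^ s * c) := by ring
    have eM : n + (s + 1) = (n + s) + 1 := by ring
    rw [e, eM, Gdouble, ih]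

lemma theta_eq (x : ℝ → ℝ) (m j : ℕ) :
    theta x m j = 2 ^ ((m : ℝ) / 2) *
      (2 * G x (m + 1) (2 * j + 1) - G x (m + 1) (2 * j) - G x (m + 1) (2 * j + 2)) := by
  rw [theta, Gdouble]
  have h2 : G x (m + 1) (2 * j + 2) = G x m (j + 1) := by
    have e : 2 * j + 2 = 2 * (j + 1) := by ring
    rw [e, Gdouble]
  rw [h2]
  unfold G
  congr 3 <;> push_cast <;> ring

lemma sum_odd_even (h : ℕ → ℝ) (N : ℕ) :
    ∑ j ∈ range (2 * N + 1), h j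
      = ∑ j ∈ range (N + 1), h (2 * j) + ∑ j ∈ range N, h (2 * j + 1) := by
  induction N with
  | zero => simp
  | succ N ih =>
    have e : 2 * (N + 1) + 1 = (2 * N + 1) + 1 + 1 := by ring
    rw [e, sum_range_succ, sum_range_succ, ih, sum_range_succ (fun j => h (2 * j)) (N + 1),
      sum_range_succ (fun j => h (2 * j + 1)) N]
    have e1 : 2 * (N + 1) = 2 * N + 1 + 1 := by ring
    rw [e1]
    ring

lemma step (x : ℝ → ℝ) (n i t : ℕ) (hi : 1 ≤ i) :
    ∑ j ∈ range (2 ^ t), theta x (n + t) (j + 2 ^ t * (i - 1))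
      = 2 ^ (((n + t : ℕ) : ℝ) / 2) *
          (2 * Fa x n i (t + 1) - 4 * Fa x n i t
            + (G x n (i - 1) + G x n i)) := by
  obtain ⟨c, rfl⟩ : ∃ c, i = c + 1 := ⟨i - 1, (Nat.succ_pred_eq_of_pos hi).symm⟩
  simp only [Nat.add_sub_cancel]
  have key : ∀ j ∈ range (2 ^ t), theta x (n + t) (j + 2 ^ t * c)
      = 2 ^ (((n + t : ℕ) : ℝ) / 2) *
        (2 * G x (n + t + 1) (2 * j + 1 + 2 * (2 ^ t * c)) - G x (n + t + 1) (2 * j + 2 * (2 ^ t * c))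
          - G x (n + t + 1) (2 * j + 2 + 2 * (2 ^ t * c))) := by
    intro j _
    have e1 : 2 * (j + 2 ^ t * c) + 1 = 2 * j + 1 + 2 * (2 ^ t * c) := by ring
    have e2 : 2 * (j + 2 ^ t * c) = 2 * j + 2 * (2 ^ t * c) := by ring
    have e3 : 2 * (j + 2 ^ t * c) + 2 = 2 * j + 2 + 2 * (2 ^ t * c) := by ring
    rw [theta_eq, e1, e3, e2]
  rw [Finset.sum_congr rfl key, ← Finset.mul_sum]
  congr 1
  have hF1 : Fa x n (c + 1) (t + 1)
      = ∑ j ∈ range (2 * 2 ^ t + 1), G x (n + t + 1) (j + 2 * (2 ^ t * c)) := by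
    rw [Fa]
    simp only [Nat.add_sub_cancel]
    apply Finset.sum_congr
    · congr 1; rw [pow_succ]; ring
    · intro j _
      have e1 : n + (t + 1) = n + t + 1 := by ring
      have e2 : j + 2 ^ (t + 1) * c = j + 2 * (2 ^ t * c) := by rw [pow_succ]; ring
      rw [e1, e2]
  have hFt : Fa x n (c + 1) t
      = ∑ j ∈ range (2 ^ t + 1), G x (n + t + 1) (2 * j + 2 * (2 ^ t * c)) := by
    rw [Fa]
    simp only [Nat.add_sub_cancel]
    apply Finset.sum_congr rfl
    intro j _
    have e2 : 2 * j + 2 * (2 ^ t * c) = 2 * (j + 2 ^ t * c) := by ring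
    rw [e2, Gdouble]
  have hsplit := sum_odd_even (fun j => G x (n + t + 1) (j + 2 * (2 ^ t * c))) (2 ^ t)
  have hodd : ∑ j ∈ range (2 ^ t), G x (n + t + 1) (2 * j + 1 + 2 * (2 ^ t * c))
      = Fa x n (c + 1) (t + 1) - Fa x n (c + 1) t := by
    rw [hF1, hFt, hsplit]; ring
  have heven : ∑ j ∈ range (2 ^ t), G x (n + t + 1) (2 * j + 2 * (2 ^ t * c))
      = Fa x n (c + 1) t - G x (n + t + 1) (2 * 2 ^ t + 2 * (2 ^ t * c)) := by
    rw [hFt, sum_range_succ]; ring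
  have heven2 : ∑ j ∈ range (2 ^ t), G x (n + t + 1) (2 * j + 2 + 2 * (2 ^ t * c))
      = Fa x n (c + 1) t - G x (n + t + 1) (2 * (2 ^ t * c)) := by
    have hs := Finset.sum_range_succ' (fun j => G x (n + t + 1) (2 * j + 2 * (2 ^ t * c))) (2 ^ t)
    rw [hFt, hs]
    have e3 : ∀ j : ℕ, 2 * (j + 1) + 2 * (2 ^ t * c) = 2 * j + 2 + 2 * (2 ^ t * c) :=
      fun j => by ring
    simp only [e3]
    have e4 : 2 * 0 + 2 * (2 ^ t * c) = 2 * (2 ^ t * c) := by ring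
    rw [e4]
    ring
  have h0 : G x (n + t + 1) (2 * (2 ^ t * c)) = G x n c := by
    have e5 : 2 * (2 ^ t * c) = 2 ^ (t + 1) * c := by rw [pow_succ]; ring
    have e6 : n + t + 1 = n + (t + 1) := by ring
    rw [e5, e6, Gpow]
  have hlast : G x (n + t + 1) (2 * 2 ^ t + 2 * (2 ^ t * c)) = G x n (c + 1) := by
    have e5 : 2 * 2 ^ t + 2 * (2 ^ t * c) = 2 ^ (t + 1) * (c + 1) := by rw [pow_succ]; ring
    have e6 : n + t + 1 = n + (t + 1) := by ring
    rw [e5, e6, Gpow]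
  calc ∑ j ∈ range (2 ^ t),
        (2 * G x (n + t + 1) (2 * j + 1 + 2 * (2 ^ t * c))
          - G x (n + t + 1) (2 * j + 2 * (2 ^ t * c))
          - G x (n + t + 1) (2 * j + 2 + 2 * (2 ^ t * c)))
      = 2 * (∑ j ∈ range (2 ^ t), G x (n + t + 1) (2 * j + 1 + 2 * (2 ^ t * c)))
        - (∑ j ∈ range (2 ^ t), G x (n + t + 1) (2 * j + 2 * (2 ^ t * c)))
        - (∑ j ∈ range (2 ^ t), G x (n + t + 1) (2 * j + 2 + 2 * (2 ^ t * c))) := by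
        rw [Finset.sum_sub_distrib, Finset.sum_sub_distrib, Finset.mul_sum]
    _ = _ := by rw [hodd, heven, heven2, h0, hlast]; ring

lemma aux_mem (A B j : ℕ) (h : ¬(A ≤ j ∧ j ≤ B)) : j < A ∨ B < j := by omega

lemma geom2 (K : ℕ) : ∑ t ∈ range (K + 1), ((2:ℝ)⁻¹) ^ t = 2 - ((2:ℝ)⁻¹) ^ K := by
  induction K with
  | zero => norm_num
  | succ K ih => rw [sum_range_succ, ih, pow_succ]; ring

lemma rpow_neg_nat (t : ℕ) : (2:ℝ) ^ (-(t:ℝ)) = ((2:ℝ)⁻¹) ^ t := by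
  rw [Real.rpow_neg (by norm_num), Real.rpow_natCast, inv_pow]


theorem stmt8 (x : ℝ → ℝ) (n k i : ℕ) (hi1 : 1 ≤ i) (hi2 : i ≤ 2 ^ n) :
    znk x n k i =
      ∑ j ∈ range (2 ^ (n + k + 1) + 1), xi n k i j * x (j / 2 ^ (n + k + 1)) := by
  obtain ⟨c, rfl⟩ : ∃ c, i = c + 1 := ⟨i - 1, (Nat.succ_pred_eq_of_pos hi1).symm⟩
  -- abbreviations
  have hGrfl : ∀ j : ℕ, x ((j : ℝ) / 2 ^ (n + k + 1)) = G x (n + k + 1) j := fun j => rfl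
  -- ====== LHS ======
  have hinner : ∀ t ∈ range (k + 1),
      (2:ℝ) ^ (-(3 * ((n + t : ℕ) : ℝ)) / 2) *
        ∑ j ∈ range (2 ^ (n + t - n)), theta x (n + t) (j + 2 ^ (n + t - n) * (c + 1 - 1))
      = 2 ^ (-(n:ℝ)) * ((2:ℝ)⁻¹) ^ t *
          (2 * Fa x n (c + 1) (t + 1) - 4 * Fa x n (c + 1) t + (G x n c + G x n (c + 1))) := by
    intro t _
    have ht : n + t - n = t := by omega
    rw [ht, step x n (c + 1) t (by omega)]
    have hc : c + 1 - 1 = c := rfl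
    rw [hc, ← mul_assoc]
    congr 1
    rw [← rpow_neg_nat, ← Real.rpow_add (by norm_num), ← Real.rpow_add (by norm_num)]
    congr 1
    push_cast
    ring
  have hFa0 : Fa x n (c + 1) 0 = G x n c + G x n (c + 1) := by
    rw [Fa]
    have hc : c + 1 - 1 = c := rfl
    rw [hc]
    norm_num [Finset.sum_range_succ]
    congr 1
    omega
  have hLHS : znk x n k (c + 1) =
      2 ^ ((3 * (n : ℝ)) / 2) * (2 ^ (-(n:ℝ)) *
        (4 * ((2:ℝ)⁻¹) ^ (k + 1) * Fa x n (c + 1) (k + 1) - 4 * (G x n c + G x n (c + 1))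
          + (G x n c + G x n (c + 1)) * (2 - ((2:ℝ)⁻¹) ^ k))) := by
    rw [znk, ← Finset.Ico_add_one_right_eq_Icc, Finset.sum_Ico_eq_sum_range]
    have hk1 : n + k + 1 - n = k + 1 := by omega
    rw [hk1, Finset.sum_congr rfl hinner]
    congr 1
    have hterm : ∀ t ∈ range (k + 1),
        (2:ℝ) ^ (-(n:ℝ)) * ((2:ℝ)⁻¹) ^ t *
          (2 * Fa x n (c + 1) (t + 1) - 4 * Fa x n (c + 1) t + (G x n c + G x n (c + 1)))
        = 2 ^ (-(n:ℝ)) *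
            ((4 * ((2:ℝ)⁻¹) ^ (t + 1) * Fa x n (c + 1) (t + 1)
              - 4 * ((2:ℝ)⁻¹) ^ t * Fa x n (c + 1) t)
            + (G x n c + G x n (c + 1)) * ((2:ℝ)⁻¹) ^ t) := by
      intro t _
      rw [pow_succ]
      ring
    rw [Finset.sum_congr rfl hterm, ← Finset.mul_sum]
    congr 1
    rw [Finset.sum_add_distrib,
      Finset.sum_range_sub (fun t => 4 * ((2:ℝ)⁻¹) ^ t * Fa x n (c + 1) t),
      ← Finset.mul_sum, geom2, hFa0]
    ring
  -- ====== RHS ======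
  have hc : c + 1 - 1 = c := rfl
  have hP : (0:ℕ) < 2 ^ (k + 1) := Nat.pow_pos (by norm_num)
  have hB : 2 ^ (k + 1) * (c + 1) ≤ 2 ^ (n + k + 1) := by
    calc 2 ^ (k + 1) * (c + 1) ≤ 2 ^ (k + 1) * 2 ^ n := Nat.mul_le_mul_left _ hi2
      _ = 2 ^ (n + k + 1) := by rw [← pow_add]; congr 1; omega
  have hsub : Finset.Icc (2 ^ (k + 1) * c) (2 ^ (k + 1) * c + 2 ^ (k + 1))
      ⊆ range (2 ^ (n + k + 1) + 1) := by
    intro j hj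
    rw [Finset.mem_Icc] at hj
    rw [Finset.mem_range, Nat.lt_succ_iff]
    refine le_trans hj.2 ?_
    calc 2 ^ (k + 1) * c + 2 ^ (k + 1) = 2 ^ (k + 1) * (c + 1) := by ring
      _ ≤ 2 ^ (n + k + 1) := hB
  have hzero : ∀ j ∈ range (2 ^ (n + k + 1) + 1),
      j ∉ Finset.Icc (2 ^ (k + 1) * c) (2 ^ (k + 1) * c + 2 ^ (k + 1)) →
      xi n k (c + 1) j * x ((j : ℝ) / 2 ^ (n + k + 1)) = 0 := by
    intro j _ hj
    rw [Finset.mem_Icc] at hj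
    rw [xi, hc, if_pos, zero_mul]
    have := aux_mem _ _ _ hj
    rcases this with h | h
    · exact Or.inl h
    · right
      calc 2 ^ (k + 1) * (c + 1) = 2 ^ (k + 1) * c + 2 ^ (k + 1) := by ring
        _ < j := h
  have hRHS1 : ∑ j ∈ range (2 ^ (n + k + 1) + 1), xi n k (c + 1) j * x ((j:ℝ) / 2 ^ (n + k + 1))
      = ∑ p ∈ range (2 ^ (k + 1) + 1),
          xi n k (c + 1) (2 ^ (k + 1) * c + p) * G x (n + k + 1) (2 ^ (k + 1) * c + p) := by
    rw [← Finset.sum_subset hsub hzero, ← Finset.Ico_add_one_right_eq_Icc, Finset.sum_Ico_eq_sum_range]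
    have e : 2 ^ (k + 1) * c + 2 ^ (k + 1) + 1 - 2 ^ (k + 1) * c = 2 ^ (k + 1) + 1 := by omega
    rw [e]
    rfl
  -- evaluate xi on the window
  have hxival : ∀ p ∈ range (2 ^ (k + 1) + 1),
      xi n k (c + 1) (2 ^ (k + 1) * c + p) * G x (n + k + 1) (2 ^ (k + 1) * c + p)
      = 2 ^ (1 - (k:ℝ) + (n:ℝ) / 2) * G x (n + k + 1) (2 ^ (k + 1) * c + p)
        + (if p ∈ ({0, 2 ^ (k + 1)} : Finset ℕ) then
            (2 ^ ((n:ℝ) / 2) * (2 ^ (-(k:ℝ)) - 2) - 2 ^ (1 - (k:ℝ) + (n:ℝ) / 2)) *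
              G x (n + k + 1) (2 ^ (k + 1) * c + p)
          else 0) := by
    intro p hp
    rw [Finset.mem_range, Nat.lt_succ_iff] at hp
    rw [xi, hc]
    have hnot : ¬(2 ^ (k + 1) * c + p < 2 ^ (k + 1) * c
        ∨ 2 ^ (k + 1) * (c + 1) < 2 ^ (k + 1) * c + p) := by
      push_neg
      constructor
      · exact Nat.le_add_right _ _
      · calc 2 ^ (k + 1) * c + p ≤ 2 ^ (k + 1) * c + 2 ^ (k + 1) := Nat.add_le_add_left hp _
          _ = 2 ^ (k + 1) * (c + 1) := by ring
    rw [if_neg hnot]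
    have hcond : (2 ^ (k + 1) * c + p = 2 ^ (k + 1) * c
        ∨ 2 ^ (k + 1) * c + p = 2 ^ (k + 1) * (c + 1))
        ↔ (p = 0 ∨ p = 2 ^ (k + 1)) := by
      have e : 2 ^ (k + 1) * (c + 1) = 2 ^ (k + 1) * c + 2 ^ (k + 1) := by ring
      rw [e]
      constructor
      · rintro (h | h)
        · left; omega
        · right; omega
      · rintro (h | h)
        · left; omega
        · right; omega
    simp only [Finset.mem_insert, Finset.mem_singleton]
    by_cases hq : p = 0 ∨ p = 2 ^ (k + 1)
    · rw [if_pos (hcond.mpr hq), if_pos hq]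
      ring
    · rw [if_neg (fun h => hq (hcond.mp h)), if_neg hq]
      ring
  have hFak : ∑ p ∈ range (2 ^ (k + 1) + 1), G x (n + k + 1) (2 ^ (k + 1) * c + p)
      = Fa x n (c + 1) (k + 1) := by
    rw [Fa, hc]
    apply Finset.sum_congr rfl
    intro j _
    congr 1 <;> omega
  have hG0 : G x (n + k + 1) (2 ^ (k + 1) * c + 0) = G x n c := by
    have e : 2 ^ (k + 1) * c + 0 = 2 ^ (k + 1) * c := by ring
    have e2 : n + k + 1 = n + (k + 1) := by ring
    rw [e, e2, Gpow]
  have hGP : G x (n + k + 1) (2 ^ (k + 1) * c + 2 ^ (k + 1)) = G x n (c + 1) := by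
    have e : 2 ^ (k + 1) * c + 2 ^ (k + 1) = 2 ^ (k + 1) * (c + 1) := by ring
    have e2 : n + k + 1 = n + (k + 1) := by ring
    rw [e, e2, Gpow]
  have hpairsub : range (2 ^ (k + 1) + 1) ∩ ({0, 2 ^ (k + 1)} : Finset ℕ)
      = ({0, 2 ^ (k + 1)} : Finset ℕ) := by
    rw [Finset.inter_eq_right]
    intro p hp
    simp only [Finset.mem_insert, Finset.mem_singleton] at hp
    rw [Finset.mem_range, Nat.lt_succ_iff]
    rcases hp with h | h <;> omega
  have hRHS : ∑ j ∈ range (2 ^ (n + k + 1) + 1), xi n k (c + 1) j * x ((j:ℝ) / 2 ^ (n + k + 1))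
      = 2 ^ (1 - (k:ℝ) + (n:ℝ) / 2) * Fa x n (c + 1) (k + 1)
        + ((2 ^ ((n:ℝ) / 2) * (2 ^ (-(k:ℝ)) - 2) - 2 ^ (1 - (k:ℝ) + (n:ℝ) / 2)) * G x n c
          + (2 ^ ((n:ℝ) / 2) * (2 ^ (-(k:ℝ)) - 2) - 2 ^ (1 - (k:ℝ) + (n:ℝ) / 2)) * G x n (c + 1)) := by
    rw [hRHS1, Finset.sum_congr rfl hxival, Finset.sum_add_distrib, ← Finset.mul_sum, hFak,
      Finset.sum_ite_mem, hpairsub, Finset.sum_pair (ne_of_lt hP), hG0, hGP]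
  -- ====== combine ======
  rw [hLHS, hRHS]
  -- scalars
  have h3n : (2:ℝ) ^ ((3 * (n : ℝ)) / 2) * 2 ^ (-(n:ℝ)) = 2 ^ ((n:ℝ) / 2) := by
    rw [← Real.rpow_add (by norm_num)]
    congr 1
    ring
  have hI : (2:ℝ) ^ (1 - (k:ℝ) + (n:ℝ) / 2)
      = 2 * ((2:ℝ)⁻¹) ^ k * 2 ^ ((n:ℝ) / 2) := by
    rw [show (1 - (k:ℝ) + (n:ℝ) / 2) = 1 + (-(k:ℝ)) + (n:ℝ) / 2 by ring,
      Real.rpow_add (by norm_num), Real.rpow_add (by norm_num), Real.rpow_one, rpow_neg_nat]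
  have hq : (2:ℝ) ^ (-(k:ℝ)) = ((2:ℝ)⁻¹) ^ k := rpow_neg_nat k
  rw [← mul_assoc, h3n, hI, hq, pow_succ]
  ring
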